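/- Let Λ be a left hereditary ring in which every left Λ-module decomposes as the direct sum of an injective module and a costable module. Then for every left Λ-module M there is a largest injective submodule of M, i.e., an injective submodule containing every injective submodule of M. -/

import Mathlib

universe u

/-- A module is *costable* (i-reduced) if it has no nonzero injective direct summand. -/
def IsCostableModule (Λ : Type u) [Ring Λ] (M : Type u) [AddCommGroup M] [Module Λ M] : Prop :=
  ∀ p : Submodule Λ M, Module.Injective Λ p → (∃ q, IsCompl p q) → p = ⊥

/-- An injective submodule is a direct summand. -/
lemma injective_submodule_isCompl {Λ : Type u} [Ring Λ] {N : Type u} [AddCommGroup N]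
    [Module Λ N] (p : Submodule Λ N) (hp : Module.Injective Λ p) : ∃ q, IsCompl p q := by
  obtain ⟨r, hr⟩ := hp.out p.subtype p.injective_subtype LinearMap.id
  exact ⟨LinearMap.ker r, LinearMap.isCompl_of_proj hr⟩

/-- Over a left hereditary ring, a quotient (surjective image) of an injective module is
injective. -/
lemma injective_of_surjective {Λ : Type u} [Ring Λ]
    (hHered : ∀ I : Ideal Λ, Module.Projective Λ I)
    {Q Q' : Type u} [AddCommGroup Q] [Module Λ Q] [AddCommGroup Q'] [Module Λ Q']
    (hQ : Module.Injective Λ Q) (f : Q →ₗ[Λ] Q') (hf : Function.Surjective f) :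
    Module.Injective Λ Q' := by
  apply Module.Baer.injective
  intro I g
  haveI := hHered I
  obtain ⟨g', hg'⟩ := Module.projective_lifting_property f g hf
  obtain ⟨h, hh⟩ := hQ.out I.subtype I.injective_subtype g'
  refine ⟨f ∘ₗ h, fun x hx => ?_⟩
  have h1 : h x = g' ⟨x, hx⟩ := hh ⟨x, hx⟩
  simp only [LinearMap.comp_apply, h1, ← hg']

/-- If `Λ` is left hereditary and every module is the direct sum of
an injective module and a costable module, then every module has a largest injective
submodule. -/
theorem largest_injective_submodule_exists
    (Λ : Type u) [Ring Λ]
    (hHered : ∀ I : Ideal Λ, Module.Projective Λ I)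
    (hDecomp : ∀ (N : Type u) [AddCommGroup N] [Module Λ N],
      ∃ (I C : Submodule Λ N), IsCompl I C ∧ Module.Injective Λ I ∧ IsCostableModule Λ C) :
    ∀ (M : Type u) [AddCommGroup M] [Module Λ M],
      ∃ N : Submodule Λ M, Module.Injective Λ N ∧
        ∀ N' : Submodule Λ M, Module.Injective Λ N' → N' ≤ N := by
  intro M _ _
  obtain ⟨I, C, hIC, hIinj, hCcost⟩ := hDecomp M
  refine ⟨I, hIinj, fun N' hN' => ?_⟩
  -- projection onto C with kernel I
  set π : M →ₗ[Λ] C := C.projectionOnto I hIC.symm with hπ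
  set f : N' →ₗ[Λ] C := π ∘ₗ N'.subtype with hfdef
  have hrange_inj : Module.Injective Λ (LinearMap.range f) :=
    injective_of_surjective hHered hN' f.rangeRestrict f.surjective_rangeRestrict
  have hcompl := injective_submodule_isCompl (LinearMap.range f) hrange_inj
  have hbot : LinearMap.range f = ⊥ := hCcost _ hrange_inj hcompl
  intro x hx
  have hfx : f ⟨x, hx⟩ = 0 := by
    have : f ⟨x, hx⟩ ∈ LinearMap.range f := ⟨⟨x, hx⟩, rfl⟩
    rwa [hbot, Submodule.mem_bot] at this
  have : π x = 0 := hfx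
  have hker : x ∈ LinearMap.ker π := this
  rwa [hπ, Submodule.linearProjOfIsCompl_ker] at hker
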